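/- For all integers k ≥ 0, m ≥ 1 and every ρ ∈ (0,1] there exists a constant C > 0 depending only on k, m and ρ such that: for every bounded open convex polyhedron T ⊂ ℝ³ with m faces, of diameter h_T, containing an open ball of radius ρ h_T, and every polynomial q of total degree at most k, there exists a polynomial P of total degree at most k + m such that P vanishes at every point of the topological boundary of T, ∫_T P λ = ∫_T q λ for every polynomial λ of total degree at most k, and C⁻¹ ‖q‖_{L²(T)} ≤ ‖P‖_{L²(T)} ≤ C ‖q‖_{L²(T)}. -/

import Mathlib

open MvPolynomial MeasureTheory
open scoped RealInnerProductSpace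

noncomputable section

/-- The `L²(T)` norm of (the function associated with) a polynomial `p`. -/
def polyL2norm (T : Set (EuclideanSpace ℝ (Fin 3))) (p : MvPolynomial (Fin 3) ℝ) : ℝ :=
  Real.sqrt (∫ x in T, (eval (fun i => x i) p) ^ 2)

open Metric Set Bornology
open scoped Pointwise

abbrev E3 := EuclideanSpace ℝ (Fin 3)

def pev (p : MvPolynomial (Fin 3) ℝ) : E3 → ℝ := fun x => eval (fun i => x i) p

lemma pev_analytic (p : MvPolynomial (Fin 3) ℝ) : AnalyticOnNhd ℝ (pev p) Set.univ := by
  induction p using MvPolynomial.induction_on with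
  | C a =>
      have : pev (C a : MvPolynomial (Fin 3) ℝ) = fun _ => a := by funext x; simp [pev]
      rw [this]; exact analyticOnNhd_const
  | add p q hp hq =>
      have : pev (p + q) = fun x => pev p x + pev q x := by
        funext x; simp [pev]
      rw [this]; exact hp.add hq
  | mul_X p i hp =>
      have : pev (p * X i) = fun x => pev p x * (EuclideanSpace.proj i) x := by
        funext x; simp [pev]
      rw [this]
      exact hp.mul ((EuclideanSpace.proj i : E3 →L[ℝ] ℝ).analyticOnNhd Set.univ)

lemma pev_continuous (p : MvPolynomial (Fin 3) ℝ) : Continuous (pev p) := by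
  rw [← continuousOn_univ]
  exact (pev_analytic p).continuousOn

lemma pev_eq_zero_of_ball {p : MvPolynomial (Fin 3) ℝ} {z : E3} {r : ℝ} (hr : 0 < r)
    (h : ∀ x ∈ ball z r, pev p x = 0) : p = 0 := by
  have h0 : Set.EqOn (pev p) 0 Set.univ := by
    apply (pev_analytic p).eqOn_zero_of_preconnected_of_eventuallyEq_zero
      isPreconnected_univ (Set.mem_univ z)
    filter_upwards [ball_mem_nhds z hr] with x hx using h x hx
  apply MvPolynomial.funext
  intro x
  have := h0 (Set.mem_univ ((EuclideanSpace.equiv (Fin 3) ℝ).symm x))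
  simpa [pev] using this

lemma intOn {f : E3 → ℝ} (hf : Continuous f) {s : Set E3} (hs : IsBounded s) :
    IntegrableOn f s volume :=
  (hf.continuousOn.integrableOn_compact hs.isCompact_closure).mono_set subset_closure

lemma cont_zero_of_ae_zero {F : E3 → ℝ} (hF : Continuous F) {U : Set E3} (hU : IsOpen U)
    (hae : ∀ᵐ x ∂(volume.restrict U), F x = 0) : ∀ x ∈ U, F x = 0 := by
  by_contra h
  push_neg at h
  obtain ⟨z, hzU, hz⟩ := h
  have hmeas : MeasurableSet {x | F x ≠ 0} :=
    (isOpen_compl_iff.mpr (isClosed_singleton.preimage hF)).measurableSet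
  have h0 : volume ({x | F x ≠ 0} ∩ U) = 0 := by
    have := hae
    rw [ae_iff, Measure.restrict_apply hmeas] at this
    simpa using this
  have hW : IsOpen ({x | F x ≠ 0} ∩ U) :=
    ((isOpen_compl_iff.mpr (isClosed_singleton.preimage hF))).inter hU
  have hne : ({x | F x ≠ 0} ∩ U).Nonempty := ⟨z, hz, hzU⟩
  exact absurd h0 (hW.measure_pos volume hne).ne'

lemma cont_zero_of_setIntegral_zero {F : E3 → ℝ} (hF : Continuous F) {U : Set E3}
    (hU : IsOpen U) (hUb : IsBounded U) (hnn : ∀ x ∈ U, 0 ≤ F x)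
    (hz : ∫ x in U, F x = 0) : ∀ x ∈ U, F x = 0 := by
  have hint : IntegrableOn F U volume := intOn hF hUb
  have hae : 0 ≤ᵐ[volume.restrict U] F := by
    rw [Filter.EventuallyLE, ae_restrict_iff' hU.measurableSet]
    exact Filter.Eventually.of_forall hnn
  have := (integral_eq_zero_iff_of_nonneg_ae hae hint).mp hz
  apply cont_zero_of_ae_zero hF hU
  filter_upwards [this] with x hx using hx

lemma sq_setIntegral_mul_le {f g : E3 → ℝ} {s : Set E3} (hf : Continuous f) (hg : Continuous g)
    (hs : IsBounded s) :
    ∫ x in s, f x * g x ≤ Real.sqrt (∫ x in s, f x ^ 2) * Real.sqrt (∫ x in s, g x ^ 2) := by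
  set A := ∫ x in s, f x ^ 2 with hA
  set B := ∫ x in s, f x * g x with hB
  set Cc := ∫ x in s, g x ^ 2 with hC
  have hA0 : 0 ≤ A := setIntegral_nonneg_of_ae_restrict
    (Filter.Eventually.of_forall fun x => sq_nonneg _)
  have hC0 : 0 ≤ Cc := setIntegral_nonneg_of_ae_restrict
    (Filter.Eventually.of_forall fun x => sq_nonneg _)
  have hq : ∀ t : ℝ, 0 ≤ Cc * (t * t) + (-2 * B) * t + A := by
    intro t
    have expand : ∫ x in s, (f x - t * g x) ^ 2 = Cc * (t * t) + (-2 * B) * t + A := by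
      have e1 : ∀ x, (f x - t * g x) ^ 2
          = t ^ 2 * g x ^ 2 + (-2 * t) * (f x * g x) + f x ^ 2 := by intro x; ring
      rw [show (fun x => (f x - t * g x) ^ 2)
          = fun x => t ^ 2 * g x ^ 2 + (-2 * t) * (f x * g x) + f x ^ 2 from funext e1]
      have i1 : IntegrableOn (fun x => t ^ 2 * g x ^ 2) s volume :=
        intOn (continuous_const.mul (hg.pow 2)) hs
      have i2 : IntegrableOn (fun x => -2 * t * (f x * g x)) s volume :=
        intOn (continuous_const.mul (hf.mul hg)) hs
      have i3 : IntegrableOn (fun x => f x ^ 2) s volume := intOn (hf.pow 2) hs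
      have i12 : IntegrableOn (fun x => t ^ 2 * g x ^ 2 + -2 * t * (f x * g x)) s volume :=
        i1.add i2
      rw [integral_add i12 i3, integral_add i1 i2,
          integral_const_mul, integral_const_mul]
      ring_nf
      rw [hA, hB, hC]
    rw [← expand]
    exact setIntegral_nonneg_of_ae_restrict
      (Filter.Eventually.of_forall fun x => sq_nonneg _)
  have hd := discrim_le_zero hq
  rw [discrim] at hd
  have hB2 : B ^ 2 ≤ A * Cc := by nlinarith
  calc B ≤ |B| := le_abs_self B
  _ = Real.sqrt (B ^ 2) := (Real.sqrt_sq_eq_abs B).symm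
  _ ≤ Real.sqrt (A * Cc) := Real.sqrt_le_sqrt hB2
  _ = Real.sqrt A * Real.sqrt Cc := Real.sqrt_mul hA0 _

lemma totalDegree_aeval_le (g : Fin 3 → MvPolynomial (Fin 3) ℝ)
    (hg : ∀ j, (g j).totalDegree ≤ 1) (p : MvPolynomial (Fin 3) ℝ) :
    (aeval g p).totalDegree ≤ p.totalDegree := by
  conv_lhs => rw [p.as_sum]
  rw [map_sum]
  apply (totalDegree_finset_sum _ _).trans
  apply Finset.sup_le
  intro d hd
  rw [aeval_monomial]
  apply (totalDegree_mul _ _).trans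
  have h1 : (algebraMap ℝ (MvPolynomial (Fin 3) ℝ) (coeff d p)).totalDegree = 0 := by
    simpa using totalDegree_C (R := ℝ) (σ := Fin 3) (coeff d p)
  rw [h1, zero_add]
  have h2 : (d.prod fun i k => g i ^ k).totalDegree ≤ d.sum fun _ n => n := by
    rw [Finsupp.prod]
    apply (totalDegree_finset_prod _ _).trans
    rw [Finsupp.sum]
    apply Finset.sum_le_sum
    intro i _
    exact (totalDegree_pow _ _).trans (by
      calc d i * (g i).totalDegree ≤ d i * 1 := Nat.mul_le_mul_left _ (hg i)
      _ = d i := mul_one _)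
  exact h2.trans (le_totalDegree hd)

/-- the affine substitution `p ↦ p(x₀ + h y)` -/
def pshift (x₀ : E3) (h : ℝ) (p : MvPolynomial (Fin 3) ℝ) : MvPolynomial (Fin 3) ℝ :=
  aeval (fun j => C (x₀ j) + C h * X j) p

lemma pshift_totalDegree (x₀ : E3) (h : ℝ) (p : MvPolynomial (Fin 3) ℝ) :
    (pshift x₀ h p).totalDegree ≤ p.totalDegree := by
  apply totalDegree_aeval_le
  intro j
  apply (totalDegree_add _ _).trans
  simp only [totalDegree_C]
  apply max_le (Nat.zero_le _)
  exact (totalDegree_mul _ _).trans (by simp [totalDegree_X])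

lemma pev_pshift (x₀ : E3) (h : ℝ) (p : MvPolynomial (Fin 3) ℝ) (y : E3) :
    pev (pshift x₀ h p) y = pev p (x₀ + h • y) := by
  unfold pev pshift
  rw [aeval_def, show algebraMap ℝ (MvPolynomial (Fin 3) ℝ) = C from rfl, ← eval_assoc]
  have hfun : (⇑(eval fun i => y i) ∘ fun j => C (x₀ j) + C h * X j)
      = fun i => (x₀ + h • y) i := by
    funext j
    simp [PiLp.add_apply, PiLp.smul_apply, smul_eq_mul]
  rw [hfun]

lemma cov_ball (g : E3 → ℝ) (x₀ : E3) {h : ℝ} (hh : 0 < h) (r : ℝ) :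
    ∫ y in ball (0 : E3) r, g (x₀ + h • y) = (h ^ 3)⁻¹ * ∫ x in ball x₀ (h * r), g x := by
  have fr : Module.finrank ℝ E3 = 3 := by
    simp [finrank_euclideanSpace]
  have step1 : ∫ y in ball (0 : E3) r, g (x₀ + h • y)
      = (h ^ 3)⁻¹ • ∫ z in h • ball (0 : E3) r, g (x₀ + z) := by
    have := Measure.setIntegral_comp_smul_of_pos (volume) (fun z => g (x₀ + z))
      (ball (0 : E3) r) hh
    rw [fr] at this
    exact this
  rw [step1]
  have hball : h • ball (0 : E3) r = ball (0 : E3) (h * r) := by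
    rw [_root_.smul_ball (ne_of_gt hh), smul_zero, Real.norm_eq_abs, abs_of_pos hh]
  rw [hball]
  have step2 : ∫ z in ball (0 : E3) (h * r), g (x₀ + z) = ∫ x in ball x₀ (h * r), g x := by
    have hmp : MeasurePreserving (fun z : E3 => x₀ + z) volume volume :=
      measurePreserving_add_left volume x₀
    have hemb : MeasurableEmbedding (fun z : E3 => x₀ + z) :=
      (MeasurableEquiv.addLeft x₀).measurableEmbedding
    have := hmp.setIntegral_preimage_emb hemb g (ball x₀ (h * r))
    rw [← this]
    congr 1
    ext z
    simp [dist_eq_norm]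
  rw [step2, smul_eq_mul]

set_option synthInstance.maxHeartbeats 1000000 in
set_option maxHeartbeats 1000000 in
lemma norm_equiv (k : ℕ) {ρ : ℝ} (hρ : 0 < ρ) :
    ∃ C₀ > (0:ℝ), ∀ p : MvPolynomial (Fin 3) ℝ, p.totalDegree ≤ k →
      (∫ x in ball (0:E3) 2, (pev p x)^2) ≤ C₀ * ∫ x in ball (0:E3) (ρ/2), (pev p x)^2 := by
  set V := restrictTotalDegree (Fin 3) ℝ k with hV
  haveI : Module.Finite ℝ V := inferInstance
  haveI : FiniteDimensional ℝ V := inferInstance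
  set n := Module.finrank ℝ V with hn
  set bV := Module.finBasis ℝ V with hbV
  set F : EuclideanSpace ℝ (Fin n) → MvPolynomial (Fin 3) ℝ :=
    fun c => ((bV.equivFun.symm (fun i => c i) : V) : MvPolynomial (Fin 3) ℝ) with hF
  -- pointwise evaluation of F as a sum
  have hev : ∀ (c : EuclideanSpace ℝ (Fin n)) (x : E3),
      pev (F c) x = ∑ i, c i * pev ((bV i : V) : MvPolynomial (Fin 3) ℝ) x := by
    intro c x
    have h1 : F c = ∑ i, c i • ((bV i : V) : MvPolynomial (Fin 3) ℝ) := by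
      rw [hF]
      simp only [Module.Basis.equivFun_symm_apply]
      push_cast
      rfl
    rw [h1]
    unfold pev
    rw [eval_sum]
    refine Finset.sum_congr rfl fun i _ => ?_
    rw [smul_eval]
  -- the quadratic functional
  set Q : Set E3 → EuclideanSpace ℝ (Fin n) → ℝ :=
    fun s c => ∫ x in s, (pev (F c) x)^2 with hQ
  have key : ∀ (s : Set E3), IsBounded s → ∀ c : EuclideanSpace ℝ (Fin n),
      Q s c = ∑ i, ∑ j, c i * c j *
        ∫ x in s, pev ((bV i : V) : MvPolynomial (Fin 3) ℝ) x *
          pev ((bV j : V) : MvPolynomial (Fin 3) ℝ) x := by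
    intro s hs c
    have funeq : (fun x => (pev (F c) x)^2) = fun x => ∑ i, ∑ j,
        c i * c j * (pev ((bV i : V) : MvPolynomial (Fin 3) ℝ) x *
          pev ((bV j : V) : MvPolynomial (Fin 3) ℝ) x) := by
      funext x
      rw [sq, hev, Finset.sum_mul_sum]
      refine Finset.sum_congr rfl fun i _ => Finset.sum_congr rfl fun j _ => by ring
    rw [hQ]
    simp only [funeq]
    rw [integral_finset_sum _ (fun i _ => ?_)]
    · refine Finset.sum_congr rfl fun i _ => ?_
      rw [integral_finset_sum _ (fun j _ => ?_)]
      · exact Finset.sum_congr rfl fun j _ => integral_const_mul _ _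
      · exact intOn (continuous_const.mul
          ((pev_continuous _).mul (pev_continuous _))) hs
    · exact intOn (continuous_finset_sum _ fun j _ => continuous_const.mul
        ((pev_continuous _).mul (pev_continuous _))) hs
  have hcont : ∀ (s : Set E3), IsBounded s → Continuous (Q s) := by
    intro s hs
    have : Q s = fun c => ∑ i, ∑ j, c i * c j *
        ∫ x in s, pev ((bV i : V) : MvPolynomial (Fin 3) ℝ) x *
          pev ((bV j : V) : MvPolynomial (Fin 3) ℝ) x := funext (key s hs)
    rw [this]
    refine continuous_finset_sum _ fun i _ => continuous_finset_sum _ fun j _ => ?_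
    exact (((EuclideanSpace.proj i).continuous).mul
      ((EuclideanSpace.proj j).continuous)).mul continuous_const
  have hQnonneg : ∀ s c, 0 ≤ Q s c := fun s c =>
    setIntegral_nonneg_of_ae_restrict (Filter.Eventually.of_forall fun x => sq_nonneg _)
  -- homogeneity
  have hhomog : ∀ (s : Set E3) (t : ℝ) (c : EuclideanSpace ℝ (Fin n)),
      Q s (t • c) = t^2 * Q s c := by
    intro s t c
    have hFs : F (t • c) = t • F c := by
      show ((bV.equivFun.symm fun i => (t • c) i : V) : MvPolynomial (Fin 3) ℝ)
          = t • ((bV.equivFun.symm fun i => c i : V) : MvPolynomial (Fin 3) ℝ)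
      have h2 : (fun i => (t • c) i) = t • (fun i => c i) := by
        funext i; simp [PiLp.smul_apply, smul_eq_mul]
      rw [h2, _root_.map_smul]
      rfl
    have : (fun x => (pev (F (t • c)) x)^2) = fun x => t^2 * (pev (F c) x)^2 := by
      funext x
      rw [hFs]
      unfold pev
      rw [smul_eval]
      ring
    rw [hQ]
    simp only [this]
    exact integral_const_mul _ _
  -- positivity on the small ball
  have hpos : ∀ c : EuclideanSpace ℝ (Fin n), c ≠ 0 → 0 < Q (ball (0:E3) (ρ/2)) c := by
    intro c hc
    rcases lt_or_eq_of_le (hQnonneg (ball (0:E3) (ρ/2)) c) with h | h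
    · exact h
    exfalso
    have hz := h.symm
    have hzero : ∀ x ∈ ball (0:E3) (ρ/2), (pev (F c) x)^2 = 0 :=
      cont_zero_of_setIntegral_zero ((pev_continuous _).pow 2) isOpen_ball
        isBounded_ball (fun x _ => sq_nonneg _) hz
    have hFc : F c = 0 := by
      apply pev_eq_zero_of_ball (half_pos hρ)
      intro x hx
      exact pow_eq_zero_iff two_ne_zero |>.mp (hzero x hx)
    have h3 : bV.equivFun.symm (fun i => c i) = 0 :=
      (ZeroMemClass.coe_eq_zero).mp hFc
    have hc0 : (fun i => c i) = 0 := (LinearEquiv.map_eq_zero_iff _).mp h3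
    apply hc
    ext i
    simpa using congrFun hc0 i
  -- nontriviality
  haveI : Nontrivial V := by
    refine ⟨⟨1, ?_⟩, 0, ?_⟩
    · rw [mem_restrictTotalDegree]
      simp [totalDegree_one]
    · intro hcon
      have : (1 : MvPolynomial (Fin 3) ℝ) = 0 := congrArg Subtype.val hcon
      exact one_ne_zero this
  have hnpos : 0 < n := Module.finrank_pos
  haveI : Nonempty (Fin n) := Fin.pos_iff_nonempty.mp hnpos
  haveI : Inhabited (Fin n) := Classical.inhabited_of_nonempty (Fin.pos_iff_nonempty.mp hnpos)
  haveI : Nontrivial (EuclideanSpace ℝ (Fin n)) := (WithLp.equiv 2 (Fin n → ℝ)).nontrivial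
  -- compactness on the sphere
  set S := sphere (0 : EuclideanSpace ℝ (Fin n)) 1 with hS
  have hScompact : IsCompact S := isCompact_sphere _ _
  have hSne : S.Nonempty := NormedSpace.sphere_nonempty.mpr zero_le_one
  obtain ⟨u₁, hu₁S, hmin⟩ := hScompact.exists_isMinOn hSne
    ((hcont (ball (0:E3) (ρ/2)) isBounded_ball).continuousOn)
  obtain ⟨u₂, hu₂S, hmax⟩ := hScompact.exists_isMaxOn hSne
    ((hcont (ball (0:E3) 2) isBounded_ball).continuousOn)
  set ε := Q (ball (0:E3) (ρ/2)) u₁ with hε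
  set M := Q (ball (0:E3) 2) u₂ with hM
  have hεpos : 0 < ε := by
    apply hpos
    intro hcon
    rw [hcon] at hu₁S
    simp [hS] at hu₁S
  have hMnn : 0 ≤ M := hQnonneg _ _
  refine ⟨M / ε + 1, by positivity, ?_⟩
  intro p hp
  -- represent p through coordinates
  set pV : V := ⟨p, (mem_restrictTotalDegree _ _ _).mpr hp⟩ with hpV
  set c : EuclideanSpace ℝ (Fin n) := (WithLp.equiv 2 (Fin n → ℝ)).symm (bV.equivFun pV) with hc
  have hFcp : F c = p := by
    show ((bV.equivFun.symm fun i => c i : V) : MvPolynomial (Fin 3) ℝ) = p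
    have h1 : (fun i => c i) = bV.equivFun pV := rfl
    rw [h1, LinearEquiv.symm_apply_apply]
  have hQ2 : Q (ball (0:E3) 2) c = ∫ x in ball (0:E3) 2, (pev p x)^2 := by
    show (∫ x in ball (0:E3) 2, (pev (F c) x)^2) = _
    rw [hFcp]
  have hQ1 : Q (ball (0:E3) (ρ/2)) c = ∫ x in ball (0:E3) (ρ/2), (pev p x)^2 := by
    show (∫ x in ball (0:E3) (ρ/2), (pev (F c) x)^2) = _
    rw [hFcp]
  rw [← hQ2, ← hQ1]
  -- the uniform bound
  rcases eq_or_ne c 0 with h0 | h0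
  · rw [h0]
    have z1 : Q (ball (0:E3) 2) 0 = 0 := by
      have := hhomog (ball (0:E3) 2) 0 0
      simpa using this
    have z2 : Q (ball (0:E3) (ρ/2)) 0 = 0 := by
      have := hhomog (ball (0:E3) (ρ/2)) 0 0
      simpa using this
    rw [z1, z2]
    simp
  · set u : EuclideanSpace ℝ (Fin n) := ‖c‖⁻¹ • c with hu
    have hcn : ‖c‖ ≠ 0 := norm_ne_zero_iff.mpr h0
    have huS : u ∈ S := by
      simp only [hS, mem_sphere_iff_norm, sub_zero, hu, norm_smul, norm_inv, norm_norm]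
      field_simp
    have hcu : c = ‖c‖ • u := by
      rw [hu, smul_smul, mul_inv_cancel₀ hcn, one_smul]
    have e2 : Q (ball (0:E3) 2) c = ‖c‖^2 * Q (ball (0:E3) 2) u := by
      conv_lhs => rw [hcu]
      exact hhomog _ _ _
    have e1 : Q (ball (0:E3) (ρ/2)) c = ‖c‖^2 * Q (ball (0:E3) (ρ/2)) u := by
      conv_lhs => rw [hcu]
      exact hhomog _ _ _
    have b2 : Q (ball (0:E3) 2) u ≤ M := hmax huS
    have b1 : ε ≤ Q (ball (0:E3) (ρ/2)) u := hmin huS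
    have hMe : M = (M / ε) * ε := by field_simp
    have hnc2 : (0:ℝ) ≤ ‖c‖^2 := sq_nonneg _
    have hQu1nn : 0 ≤ Q (ball (0:E3) (ρ/2)) u := hQnonneg _ _
    rw [e1, e2]
    have hdiv : 0 ≤ M / ε := div_nonneg hMnn hεpos.le
    nlinarith [mul_le_mul_of_nonneg_left b2 hnc2,
      mul_le_mul_of_nonneg_left b1 hnc2,
      mul_le_mul_of_nonneg_left (mul_le_mul_of_nonneg_left b1 hdiv) hnc2]

set_option maxHeartbeats 2000000 in
set_option synthInstance.maxHeartbeats 1000000 in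
/-- Boundary-vanishing polynomial lift: on a bounded open convex polyhedron `T ⊂ ℝ³` with
`m` faces containing a ball of radius `ρ · h_T`, every polynomial `q` of degree at most `k`
has a lift `P` of degree at most `k + m` vanishing on `∂T`, with the same moments against
polynomials of degree at most `k`, and with comparable `L²(T)` norm, uniformly over such
polyhedra. -/
theorem boundary_vanishing_lift (k m : ℕ) (hm : 1 ≤ m) (ρ : ℝ)
    (hρ : ρ ∈ Set.Ioc (0 : ℝ) 1) :
    ∃ C > (0 : ℝ),
      ∀ (v : Fin m → EuclideanSpace ℝ (Fin 3)) (c : Fin m → ℝ), (∀ i, ‖v i‖ = 1) →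
      ∀ T : Set (EuclideanSpace ℝ (Fin 3)), T = {x | ∀ i, 0 < ⟪v i, x⟫ + c i} →
        Bornology.IsBounded T →
        (∀ i, ∃ y ∈ closure T, ⟪v i, y⟫ + c i = 0) →
        (∃ x₀, Metric.ball x₀ (ρ * Metric.diam T) ⊆ T) →
        ∀ q : MvPolynomial (Fin 3) ℝ, q.totalDegree ≤ k →
          ∃ P : MvPolynomial (Fin 3) ℝ, P.totalDegree ≤ k + m ∧
            (∀ x ∈ frontier T, eval (fun i => x i) P = 0) ∧
            (∀ lam : MvPolynomial (Fin 3) ℝ, lam.totalDegree ≤ k →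
              ∫ x in T, eval (fun i => x i) P * eval (fun i => x i) lam =
              ∫ x in T, eval (fun i => x i) q * eval (fun i => x i) lam) ∧
            C⁻¹ * polyL2norm T q ≤ polyL2norm T P ∧
            polyL2norm T P ≤ C * polyL2norm T q := by
  obtain ⟨hρ0, hρ1⟩ := hρ
  obtain ⟨C₀, hC₀pos, hNE⟩ := norm_equiv k hρ0
  set K := Real.sqrt C₀ * (2 / ρ) ^ m with hK
  have hKnn : 0 ≤ K := by positivity
  refine ⟨max K 1, lt_of_lt_of_le one_pos (le_max_right _ _), ?_⟩
  intro v c hv T hTeq hTb hfaces hball q hq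
  obtain ⟨x₀, hx₀⟩ := hball
  -- linear factors
  set ℓ : Fin m → MvPolynomial (Fin 3) ℝ :=
    fun i => C (c i) + ∑ j, C (v i j) * X j with hℓ
  set bpoly : MvPolynomial (Fin 3) ℝ := ∏ i, ℓ i with hbpoly
  have hℓeval : ∀ (i : Fin m) (x : E3), pev (ℓ i) x = ⟪v i, x⟫ + c i := by
    intro i x
    unfold pev
    rw [hℓ]
    simp only [map_add, eval_C, eval_sum, eval_mul, eval_X]
    rw [PiLp.inner_apply]
    simp only [RCLike.inner_apply, conj_trivial]
    ring_nf
    congr 1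
    exact Finset.sum_congr rfl fun j _ => mul_comm _ _
  have hbeval : ∀ x : E3, pev bpoly x = ∏ i, pev (ℓ i) x := by
    intro x
    rw [hbpoly]
    unfold pev
    rw [eval_prod]
  -- openness
  have hTopen : IsOpen T := by
    rw [hTeq, show {x : E3 | ∀ i, 0 < ⟪v i, x⟫ + c i} = ⋂ i, {x : E3 | 0 < ⟪v i, x⟫ + c i}
      by ext x; simp]
    exact isOpen_iInter_of_finite fun i =>
      isOpen_lt continuous_const ((continuous_const.inner continuous_id).add continuous_const)
  -- nonempty
  have hTne : T.Nonempty := by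
    obtain ⟨y0, hy0, -⟩ := hfaces ⟨0, hm⟩
    exact closure_nonempty_iff.mp ⟨y0, hy0⟩
  -- positive diameter
  set h : ℝ := Metric.diam T with hh
  have hdiam : 0 < h := by
    obtain ⟨z, hz⟩ := hTne
    obtain ⟨ε, hε, hbz⟩ := Metric.isOpen_iff.mp hTopen z hz
    set w : E3 := z + (ε/2) • EuclideanSpace.single (0 : Fin 3) (1:ℝ) with hw
    have hdistwz : dist w z = ε/2 := by
      rw [hw, dist_eq_norm]
      have e0 : z + (ε/2) • EuclideanSpace.single (0 : Fin 3) (1:ℝ) - z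
          = (ε/2) • EuclideanSpace.single (0 : Fin 3) (1:ℝ) := by abel
      rw [e0, norm_smul, EuclideanSpace.norm_single, norm_one, mul_one, Real.norm_eq_abs,
        abs_of_pos (half_pos hε)]
    have hwT : w ∈ T := hbz (by
      rw [mem_ball, hdistwz]
      linarith)
    have := Metric.dist_le_diam_of_mem hTb hwT hz
    rw [hdistwz] at this
    linarith
  have hx₀T : x₀ ∈ T := hx₀ (mem_ball_self (by positivity))
  have hTsub2 : T ⊆ ball x₀ (h * 2) := by
    intro x hx
    rw [mem_ball]
    have := Metric.dist_le_diam_of_mem hTb hx hx₀T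
    rw [← hh] at this
    linarith
  have hB'subT : ball x₀ (ρ * h / 2) ⊆ T :=
    (ball_subset_ball (by nlinarith)).trans hx₀
  -- factor bounds
  have hposfac : ∀ (i : Fin m), ∀ x ∈ T, 0 < pev (ℓ i) x := by
    intro i x hx
    rw [hℓeval]
    rw [hTeq] at hx
    exact hx i
  have hup : ∀ (i : Fin m), ∀ x ∈ T, pev (ℓ i) x ≤ h := by
    intro i x hx
    obtain ⟨y, hyc, hy0⟩ := hfaces i
    have h1 : pev (ℓ i) x = ⟪v i, x - y⟫ := by
      rw [hℓeval, inner_sub_right]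
      linarith [hy0]
    rw [h1]
    calc ⟪v i, x - y⟫ ≤ ‖v i‖ * ‖x - y‖ := real_inner_le_norm _ _
    _ = dist x y := by rw [hv i, one_mul, dist_eq_norm]
    _ ≤ Metric.diam (closure T) :=
        Metric.dist_le_diam_of_mem hTb.closure (subset_closure hx) hyc
    _ = h := by rw [Metric.diam_closure]
  have hlow : ∀ (i : Fin m), ∀ x ∈ ball x₀ (ρ * h / 2), ρ * h / 2 ≤ pev (ℓ i) x := by
    intro i x hx
    by_contra hcon
    push_neg at hcon
    rw [hℓeval] at hcon
    set x' : E3 := x - (ρ * h / 2) • v i with hx'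
    have hd1 : dist x' x = ρ * h / 2 := by
      rw [hx', dist_eq_norm]
      have e0 : x - (ρ * h / 2) • v i - x = -((ρ * h / 2) • v i) := by abel
      rw [e0, norm_neg, norm_smul, hv i, mul_one, Real.norm_eq_abs,
        abs_of_pos (by positivity : (0:ℝ) < ρ * h / 2)]
    have hx'T : x' ∈ T := hx₀ (by
      rw [mem_ball]
      calc dist x' x₀ ≤ dist x' x + dist x x₀ := dist_triangle _ _ _
      _ < ρ * h / 2 + ρ * h / 2 := by
          rw [hd1]
          exact add_lt_add_right (mem_ball.mp hx) _
      _ = ρ * h := by ring)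
    rw [hTeq] at hx'T
    have := hx'T i
    rw [hx', inner_sub_right, real_inner_smul_right, real_inner_self_eq_norm_sq, hv i] at this
    nlinarith
  have hbub : ∀ x ∈ T, pev bpoly x ≤ h ^ m := by
    intro x hx
    rw [hbeval]
    have e : (h:ℝ) ^ m = ∏ _i : Fin m, h := by
      rw [Finset.prod_const, Finset.card_univ, Fintype.card_fin]
    rw [e]
    exact Finset.prod_le_prod (fun i _ => (hposfac i x hx).le) (fun i _ => hup i x hx)
  have hblb : ∀ x ∈ ball x₀ (ρ * h / 2), (ρ * h / 2) ^ m ≤ pev bpoly x := by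
    intro x hx
    rw [hbeval]
    have e : (ρ * h / 2) ^ m = ∏ _i : Fin m, (ρ * h / 2) := by
      rw [Finset.prod_const, Finset.card_univ, Fintype.card_fin]
    rw [e]
    exact Finset.prod_le_prod (fun i _ => by positivity) (fun i _ => hlow i x hx)
  have hbpos : ∀ x ∈ T, 0 < pev bpoly x := by
    intro x hx
    rw [hbeval]
    exact Finset.prod_pos fun i _ => hposfac i x hx
  -- the finite-dimensional space
  set V := restrictTotalDegree (Fin 3) ℝ k with hV
  haveI : Module.Finite ℝ V := inferInstance
  haveI : FiniteDimensional ℝ V := inferInstance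
  -- the Gram operator
  set Bform : V →ₗ[ℝ] Module.Dual ℝ V := LinearMap.mk₂ ℝ
    (fun Λ μ => ∫ x in T, pev ↑Λ x * pev ↑μ x * pev bpoly x)
    (by
      intro Λ₁ Λ₂ μ
      beta_reduce
      have e : (fun x => pev ↑(Λ₁ + Λ₂) x * pev ↑μ x * pev bpoly x)
          = fun x => pev (↑Λ₁ : MvPolynomial (Fin 3) ℝ) x * pev ↑μ x * pev bpoly x
            + pev (↑Λ₂ : MvPolynomial (Fin 3) ℝ) x * pev ↑μ x * pev bpoly x := by
        funext x
        rw [Submodule.coe_add]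
        unfold pev
        rw [map_add]
        ring
      rw [e]
      exact integral_add
        (intOn (((pev_continuous _).mul (pev_continuous _)).mul (pev_continuous _)) hTb)
        (intOn (((pev_continuous _).mul (pev_continuous _)).mul (pev_continuous _)) hTb))
    (by
      intro a Λ μ
      beta_reduce
      have e : (fun x => pev ↑(a • Λ) x * pev ↑μ x * pev bpoly x)
          = fun x => a * (pev (↑Λ : MvPolynomial (Fin 3) ℝ) x * pev ↑μ x * pev bpoly x) := by
        funext x
        rw [Submodule.coe_smul]
        unfold pev
        rw [smul_eval]
        ring
      rw [e]
      rw [integral_const_mul]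
      rfl)
    (by
      intro Λ μ₁ μ₂
      beta_reduce
      have e : (fun x => pev ↑Λ x * pev ↑(μ₁ + μ₂) x * pev bpoly x)
          = fun x => pev (↑Λ : MvPolynomial (Fin 3) ℝ) x * pev ↑μ₁ x * pev bpoly x
            + pev (↑Λ : MvPolynomial (Fin 3) ℝ) x * pev ↑μ₂ x * pev bpoly x := by
        funext x
        rw [Submodule.coe_add]
        unfold pev
        rw [map_add]
        ring
      rw [e]
      exact integral_add
        (intOn (((pev_continuous _).mul (pev_continuous _)).mul (pev_continuous _)) hTb)
        (intOn (((pev_continuous _).mul (pev_continuous _)).mul (pev_continuous _)) hTb))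
    (by
      intro a Λ μ
      beta_reduce
      have e : (fun x => pev ↑Λ x * pev ↑(a • μ) x * pev bpoly x)
          = fun x => a * (pev (↑Λ : MvPolynomial (Fin 3) ℝ) x * pev ↑μ x * pev bpoly x) := by
        funext x
        rw [Submodule.coe_smul]
        unfold pev
        rw [smul_eval]
        ring
      rw [e]
      rw [integral_const_mul]
      rfl) with hBform
  -- injectivity of the Gram operator
  have hinj : Function.Injective Bform := by
    rw [← LinearMap.ker_eq_bot]
    rw [LinearMap.ker_eq_bot']
    intro Λ hΛ
    have h00 : ∫ x in T, pev ↑Λ x * pev ↑Λ x * pev bpoly x = 0 := by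
      have := congrArg (fun g => g Λ) hΛ
      simpa [hBform] using this
    have hzero : ∀ x ∈ T, pev (↑Λ : MvPolynomial (Fin 3) ℝ) x * pev ↑Λ x * pev bpoly x = 0 :=
      cont_zero_of_setIntegral_zero
        (((pev_continuous _).mul (pev_continuous _)).mul (pev_continuous _)) hTopen hTb
        (fun x hx => mul_nonneg (mul_self_nonneg _) (hbpos x hx).le) h00
    have hzΛ : ∀ x ∈ ball x₀ (ρ * h), pev (↑Λ : MvPolynomial (Fin 3) ℝ) x = 0 := by
      intro x hx
      have hxT : x ∈ T := hx₀ hx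
      have := hzero x hxT
      rcases mul_eq_zero.mp this with h1 | h2
      · exact mul_self_eq_zero.mp h1
      · exact absurd h2 (hbpos x hxT).ne'
    have : (↑Λ : MvPolynomial (Fin 3) ℝ) = 0 :=
      pev_eq_zero_of_ball (by positivity) hzΛ
    exact Subtype.coe_injective this
  -- surjectivity
  have hsurj : Function.Surjective Bform := by
    rw [← LinearMap.injective_iff_surjective_of_finrank_eq_finrank
      (Subspace.dual_finrank_eq).symm]
    exact hinj
  -- the target functional
  set Lq : Module.Dual ℝ V :=
    { toFun := fun μ => ∫ x in T, pev q x * pev ↑μ x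
      map_add' := by
        intro μ₁ μ₂
        show (∫ x in T, pev q x * pev (↑(μ₁ + μ₂) : MvPolynomial (Fin 3) ℝ) x)
          = (∫ x in T, pev q x * pev (↑μ₁ : MvPolynomial (Fin 3) ℝ) x)
            + ∫ x in T, pev q x * pev (↑μ₂ : MvPolynomial (Fin 3) ℝ) x
        have e : (fun x => pev q x * pev ↑(μ₁ + μ₂) x)
            = fun x => pev q x * pev (↑μ₁ : MvPolynomial (Fin 3) ℝ) x
              + pev q x * pev (↑μ₂ : MvPolynomial (Fin 3) ℝ) x := by
          funext x
          rw [Submodule.coe_add]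
          unfold pev
          rw [map_add]
          ring
        rw [e]
        exact integral_add
          (intOn ((pev_continuous _).mul (pev_continuous _)) hTb)
          (intOn ((pev_continuous _).mul (pev_continuous _)) hTb)
      map_smul' := by
        intro a μ
        show (∫ x in T, pev q x * pev (↑(a • μ) : MvPolynomial (Fin 3) ℝ) x)
          = a • ∫ x in T, pev q x * pev (↑μ : MvPolynomial (Fin 3) ℝ) x
        have e : (fun x => pev q x * pev ↑(a • μ) x)
            = fun x => a * (pev q x * pev (↑μ : MvPolynomial (Fin 3) ℝ) x) := by
          funext x
          rw [Submodule.coe_smul]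
          unfold pev
          rw [smul_eval]
          ring
        rw [e, integral_const_mul, smul_eq_mul] } with hLq
  obtain ⟨Λ, hΛ⟩ := hsurj Lq
  have hmom : ∀ μ : V, ∫ x in T, pev ↑Λ x * pev ↑μ x * pev bpoly x
      = ∫ x in T, pev q x * pev ↑μ x := by
    intro μ
    have := congrArg (fun g => g μ) hΛ
    simpa [hBform, hLq] using this
  -- the lifted polynomial
  set P : MvPolynomial (Fin 3) ℝ := (↑Λ : MvPolynomial (Fin 3) ℝ) * bpoly with hP
  have hΛdeg : (↑Λ : MvPolynomial (Fin 3) ℝ).totalDegree ≤ k :=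
    (mem_restrictTotalDegree _ _ _).mp Λ.2
  have hPeval : ∀ x : E3, pev P x = pev (↑Λ : MvPolynomial (Fin 3) ℝ) x * pev bpoly x := by
    intro x
    rw [hP]
    unfold pev
    rw [eval_mul]
  refine ⟨P, ?_, ?_, ?_, ?_, ?_⟩
  -- degree
  · rw [hP]
    apply (totalDegree_mul _ _).trans
    have hbdeg : bpoly.totalDegree ≤ m := by
      rw [hbpoly]
      apply (totalDegree_finset_prod _ _).trans
      calc ∑ i, (ℓ i).totalDegree ≤ ∑ _i : Fin m, 1 := Finset.sum_le_sum fun i _ => by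
            rw [hℓ]
            apply (totalDegree_add _ _).trans
            apply max_le
            · rw [totalDegree_C]; exact Nat.zero_le _
            · apply (totalDegree_finset_sum _ _).trans
              apply Finset.sup_le fun j _ => ?_
              apply (totalDegree_mul _ _).trans
              rw [totalDegree_C, totalDegree_X]
      _ = m := by simp
    exact Nat.add_le_add hΛdeg hbdeg
  -- vanishing on the frontier
  · intro x hx
    rw [hTopen.frontier_eq] at hx
    obtain ⟨hxc, hxnT⟩ := hx
    have hge : ∀ i, 0 ≤ ⟪v i, x⟫ + c i := by
      have hsub : closure T ⊆ {x : E3 | ∀ i, 0 ≤ ⟪v i, x⟫ + c i} := by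
        apply closure_minimal
        · rw [hTeq]
          intro y hy i
          exact (hy i).le
        · rw [show {x : E3 | ∀ i, 0 ≤ ⟪v i, x⟫ + c i}
              = ⋂ i, {x : E3 | 0 ≤ ⟪v i, x⟫ + c i} by ext y; simp]
          exact isClosed_iInter fun i =>
            isClosed_le continuous_const ((continuous_const.inner continuous_id).add
              continuous_const)
      exact hsub hxc
    have hex : ∃ i, ⟪v i, x⟫ + c i ≤ 0 := by
      by_contra hcon
      push_neg at hcon
      exact hxnT (by rw [hTeq]; exact fun i => hcon i)
    obtain ⟨i, hi⟩ := hex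
    have hzi : pev (ℓ i) x = 0 := by
      rw [hℓeval]
      linarith [hge i]
    show pev P x = 0
    rw [hPeval, hbeval]
    rw [Finset.prod_eq_zero (Finset.mem_univ i) hzi]
    ring
  -- moments
  · intro lam hlam
    have := hmom ⟨lam, (mem_restrictTotalDegree _ _ _).mpr hlam⟩
    show ∫ x in T, pev P x * pev lam x = ∫ x in T, pev q x * pev lam x
    rw [show (fun x => pev P x * pev lam x)
        = fun x => pev (↑Λ : MvPolynomial (Fin 3) ℝ) x * pev lam x * pev bpoly x from
      funext fun x => by rw [hPeval]; ring]
    exact this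
  -- the two norm inequalities: proven together below
  all_goals {
    have hIq : (0:ℝ) ≤ ∫ x in T, (pev q x)^2 :=
      setIntegral_nonneg_of_ae_restrict (Filter.Eventually.of_forall fun x => sq_nonneg _)
    have hIP : (0:ℝ) ≤ ∫ x in T, (pev P x)^2 :=
      setIntegral_nonneg_of_ae_restrict (Filter.Eventually.of_forall fun x => sq_nonneg _)
    have hIΛ : (0:ℝ) ≤ ∫ x in T, (pev (↑Λ : MvPolynomial (Fin 3) ℝ) x)^2 :=
      setIntegral_nonneg_of_ae_restrict (Filter.Eventually.of_forall fun x => sq_nonneg _)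
    set sP := Real.sqrt (∫ x in T, (pev P x)^2) with hsP
    set sq' := Real.sqrt (∫ x in T, (pev q x)^2) with hsq'
    set sΛ := Real.sqrt (∫ x in T, (pev (↑Λ : MvPolynomial (Fin 3) ℝ) x)^2) with hsΛ
    have hsPnn : 0 ≤ sP := Real.sqrt_nonneg _
    have hsqnn : 0 ≤ sq' := Real.sqrt_nonneg _
    have hsΛnn : 0 ≤ sΛ := Real.sqrt_nonneg _
    have hpl2P : polyL2norm T P = sP := rfl
    have hpl2q : polyL2norm T q = sq' := rfl
    -- lower bound:  sq' ≤ sP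
    have hlower : sq' ≤ sP := by
      have hmomq := hmom ⟨q, (mem_restrictTotalDegree _ _ _).mpr hq⟩
      have hPq : ∫ x in T, pev P x * pev q x = ∫ x in T, (pev q x)^2 := by
        rw [show (fun x => pev P x * pev q x)
            = fun x => pev (↑Λ : MvPolynomial (Fin 3) ℝ) x * pev q x * pev bpoly x from
          funext fun x => by rw [hPeval]; ring]
        rw [show (fun x => (pev q x)^2) = fun x => pev q x * pev q x from
          funext fun x => sq (pev q x) ▸ by ring]
        exact hmomq
      have hCS : ∫ x in T, pev P x * pev q x ≤ sP * sq' :=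
        sq_setIntegral_mul_le (pev_continuous _) (pev_continuous _) hTb
      rw [hPq] at hCS
      rcases eq_or_lt_of_le hsqnn with h0 | h0
      · rw [← h0]; exact hsPnn
      · have h2 : sq' * sq' ≤ sP * sq' := by
          have e2 : sq' * sq' = ∫ x in T, (pev q x)^2 := Real.mul_self_sqrt hIq
          rw [e2]
          exact hCS
        exact le_of_mul_le_mul_right h2 h0
    -- upper bound: sP ≤ K * sq'
    have hupper : sP ≤ K * sq' := by
      -- (b) IP ≤ (∫ Λ Λ b) * h^m
      have hM1nn : (0:ℝ) ≤ ∫ x in T, pev (↑Λ : MvPolynomial (Fin 3) ℝ) x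
          * pev ↑Λ x * pev bpoly x :=
        setIntegral_nonneg_of_ae_restrict (by
          rw [Filter.EventuallyLE, ae_restrict_iff' hTopen.measurableSet]
          exact Filter.Eventually.of_forall fun x hx =>
            mul_nonneg (mul_self_nonneg _) (hbpos x hx).le)
      have hb : (∫ x in T, (pev P x)^2)
          ≤ (∫ x in T, pev (↑Λ : MvPolynomial (Fin 3) ℝ) x * pev ↑Λ x * pev bpoly x) * h^m := by
        rw [← integral_mul_const]
        apply setIntegral_mono_on
        · exact intOn ((pev_continuous _).pow 2) hTb
        · exact intOn ((((pev_continuous _).mul (pev_continuous _)).mul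
            (pev_continuous _)).mul continuous_const) hTb
        · exact hTopen.measurableSet
        · intro x hx
          rw [hPeval]
          have h1 : 0 ≤ pev (↑Λ : MvPolynomial (Fin 3) ℝ) x * pev ↑Λ x * pev bpoly x :=
            mul_nonneg (mul_self_nonneg _) (hbpos x hx).le
          calc (pev (↑Λ : MvPolynomial (Fin 3) ℝ) x * pev bpoly x)^2
              = (pev (↑Λ : MvPolynomial (Fin 3) ℝ) x * pev ↑Λ x * pev bpoly x) * pev bpoly x := by
                ring
          _ ≤ (pev (↑Λ : MvPolynomial (Fin 3) ℝ) x * pev ↑Λ x * pev bpoly x) * h^m :=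
              mul_le_mul_of_nonneg_left (hbub x hx) h1
      -- (c) ∫ Λ Λ b = ∫ q Λ ≤ sq' * sΛ
      have hc : (∫ x in T, pev (↑Λ : MvPolynomial (Fin 3) ℝ) x * pev ↑Λ x * pev bpoly x)
          ≤ sq' * sΛ := by
        rw [hmom Λ]
        exact sq_setIntegral_mul_le (pev_continuous _) (pev_continuous _) hTb
      -- (d) sΛ * β ≤ √C₀ * sP  where β = (ρh/2)^m
      set β := (ρ * h / 2)^m with hβ
      have hβpos : 0 < β := by positivity
      have hh3 : (0:ℝ) < h ^ 3 := by positivity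
      set J := ∫ x in ball x₀ (ρ * h / 2), (pev (↑Λ : MvPolynomial (Fin 3) ℝ) x)^2 with hJ
      have hJnn : 0 ≤ J :=
        setIntegral_nonneg_of_ae_restrict (Filter.Eventually.of_forall fun x => sq_nonneg _)
      have hIΛJ : (∫ x in T, (pev (↑Λ : MvPolynomial (Fin 3) ℝ) x)^2) ≤ C₀ * J := by
        have step1 : (∫ x in T, (pev (↑Λ : MvPolynomial (Fin 3) ℝ) x)^2)
            ≤ ∫ x in ball x₀ (h * 2), (pev (↑Λ : MvPolynomial (Fin 3) ℝ) x)^2 :=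
          setIntegral_mono_set (intOn ((pev_continuous _).pow 2) isBounded_ball)
            (Filter.Eventually.of_forall fun x => sq_nonneg _)
            (HasSubset.Subset.eventuallyLE hTsub2)
        have cov2 : ∫ y in ball (0:E3) 2,
              (pev (pshift x₀ h (↑Λ : MvPolynomial (Fin 3) ℝ)) y)^2
            = (h ^ 3)⁻¹ * ∫ x in ball x₀ (h * 2),
              (pev (↑Λ : MvPolynomial (Fin 3) ℝ) x)^2 := by
          rw [show (fun y => (pev (pshift x₀ h (↑Λ : MvPolynomial (Fin 3) ℝ)) y)^2)
              = fun y => (pev (↑Λ : MvPolynomial (Fin 3) ℝ) (x₀ + h • y))^2 from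
            funext fun y => by rw [pev_pshift]]
          exact cov_ball (fun x => (pev (↑Λ : MvPolynomial (Fin 3) ℝ) x)^2) x₀ hdiam 2
        have covs : ∫ y in ball (0:E3) (ρ/2),
              (pev (pshift x₀ h (↑Λ : MvPolynomial (Fin 3) ℝ)) y)^2
            = (h ^ 3)⁻¹ * J := by
          rw [show (fun y => (pev (pshift x₀ h (↑Λ : MvPolynomial (Fin 3) ℝ)) y)^2)
              = fun y => (pev (↑Λ : MvPolynomial (Fin 3) ℝ) (x₀ + h • y))^2 from
            funext fun y => by rw [pev_pshift]]
          rw [cov_ball (fun x => (pev (↑Λ : MvPolynomial (Fin 3) ℝ) x)^2) x₀ hdiam (ρ/2)]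
          rw [show h * (ρ/2) = ρ * h / 2 by ring]
        have hNEshift := hNE (pshift x₀ h (↑Λ : MvPolynomial (Fin 3) ℝ))
          ((pshift_totalDegree _ _ _).trans hΛdeg)
        rw [cov2, covs] at hNEshift
        calc (∫ x in T, (pev (↑Λ : MvPolynomial (Fin 3) ℝ) x)^2)
            ≤ ∫ x in ball x₀ (h * 2), (pev (↑Λ : MvPolynomial (Fin 3) ℝ) x)^2 := step1
        _ = h ^ 3 * ((h ^ 3)⁻¹ * ∫ x in ball x₀ (h * 2),
              (pev (↑Λ : MvPolynomial (Fin 3) ℝ) x)^2) := by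
            field_simp
        _ ≤ h ^ 3 * (C₀ * ((h ^ 3)⁻¹ * J)) :=
            mul_le_mul_of_nonneg_left hNEshift hh3.le
        _ = C₀ * J := by
            field_simp
      have hJβ : J * β^2 ≤ ∫ x in T, (pev P x)^2 := by
        have e1 : J * β^2 = ∫ x in ball x₀ (ρ * h / 2),
            (pev (↑Λ : MvPolynomial (Fin 3) ℝ) x)^2 * β^2 := (integral_mul_const _ _).symm
        rw [e1]
        calc (∫ x in ball x₀ (ρ * h / 2), (pev (↑Λ : MvPolynomial (Fin 3) ℝ) x)^2 * β^2)
            ≤ ∫ x in ball x₀ (ρ * h / 2), (pev P x)^2 := by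
              apply setIntegral_mono_on
              · exact intOn (((pev_continuous _).pow 2).mul continuous_const) isBounded_ball
              · exact intOn ((pev_continuous _).pow 2) isBounded_ball
              · exact measurableSet_ball
              · intro x hx
                rw [hPeval, mul_pow]
                apply mul_le_mul_of_nonneg_left _ (sq_nonneg _)
                exact pow_le_pow_left₀ hβpos.le (hblb x hx) 2
        _ ≤ ∫ x in T, (pev P x)^2 :=
            setIntegral_mono_set (intOn ((pev_continuous _).pow 2) hTb)
              (Filter.Eventually.of_forall fun x => sq_nonneg _)
              (HasSubset.Subset.eventuallyLE hB'subT)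
      have hd : sΛ * β ≤ Real.sqrt C₀ * sP := by
        have h1 : (∫ x in T, (pev (↑Λ : MvPolynomial (Fin 3) ℝ) x)^2) * β^2
            ≤ C₀ * ∫ x in T, (pev P x)^2 := by
          calc (∫ x in T, (pev (↑Λ : MvPolynomial (Fin 3) ℝ) x)^2) * β^2
              ≤ (C₀ * J) * β^2 := mul_le_mul_of_nonneg_right hIΛJ (sq_nonneg _)
          _ = C₀ * (J * β^2) := by ring
          _ ≤ C₀ * ∫ x in T, (pev P x)^2 := mul_le_mul_of_nonneg_left hJβ hC₀pos.le
        calc sΛ * β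
            = Real.sqrt ((∫ x in T, (pev (↑Λ : MvPolynomial (Fin 3) ℝ) x)^2) * β^2) := by
              rw [Real.sqrt_mul hIΛ, Real.sqrt_sq hβpos.le]
        _ ≤ Real.sqrt (C₀ * ∫ x in T, (pev P x)^2) := Real.sqrt_le_sqrt h1
        _ = Real.sqrt C₀ * sP := Real.sqrt_mul hC₀pos.le _
      -- combine
      have hhm : h ^ m = β * (2/ρ)^m := by
        rw [hβ, ← mul_pow]
        congr 1
        field_simp
      have hchain : sP * sP * β ≤ (K * sq') * sP * β := by
        have c1 : (∫ x in T, (pev P x)^2)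
            ≤ (sq' * sΛ) * h^m :=
          hb.trans (mul_le_mul_of_nonneg_right hc (pow_nonneg hdiam.le m))
        have c2 : sP * sP = ∫ x in T, (pev P x)^2 := Real.mul_self_sqrt hIP
        calc sP * sP * β = (∫ x in T, (pev P x)^2) * β := by rw [c2]
        _ ≤ ((sq' * sΛ) * h^m) * β := mul_le_mul_of_nonneg_right c1 hβpos.le
        _ = sq' * (sΛ * β) * (2/ρ)^m * β := by rw [hhm]; ring
        _ ≤ sq' * (Real.sqrt C₀ * sP) * (2/ρ)^m * β := by
            apply mul_le_mul_of_nonneg_right _ hβpos.le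
            apply mul_le_mul_of_nonneg_right _ (by positivity)
            exact mul_le_mul_of_nonneg_left hd hsqnn
        _ = (K * sq') * sP * β := by rw [hK]; ring
      have hfin : sP * sP ≤ (K * sq') * sP :=
        le_of_mul_le_mul_right hchain hβpos
      rcases eq_or_lt_of_le hsPnn with h0 | h0
      · rw [← h0]; positivity
      · exact le_of_mul_le_mul_right (by calc sP * sP = sP * sP := rfl
          _ ≤ (K * sq') * sP := hfin) h0
    -- conclude
    first
    | (show (max K 1)⁻¹ * polyL2norm T q ≤ polyL2norm T P
       rw [hpl2P, hpl2q]
       have hM1 : (1:ℝ) ≤ max K 1 := le_max_right _ _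
       have : (max K 1)⁻¹ ≤ 1 := inv_le_one_of_one_le₀ hM1
       calc (max K 1)⁻¹ * sq' ≤ 1 * sq' := mul_le_mul_of_nonneg_right this hsqnn
       _ = sq' := one_mul _
       _ ≤ sP := hlower)
    | (show polyL2norm T P ≤ max K 1 * polyL2norm T q
       rw [hpl2P, hpl2q]
       exact hupper.trans (mul_le_mul_of_nonneg_right (le_max_left _ _) hsqnn))
  }
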